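/- Let U be a complex k×r matrix with orthonormal columns (U*U = I_r), let M be a k×k complex Hermitian matrix with U U* M = M, and let f : ℝ → ℝ be a function with f(0) = 0. Then Tr(F(M)) = Tr(F(U* M U)), where F denotes the matrix extension of f applied via a spectral decomposition (note U* M U is an r×r Hermitian matrix). -/

import Mathlib

open Matrix Polynomial

/-- The matrix extension `F` of `f : ℝ → ℝ`: for Hermitian `A = U Diag(λ) U*`,
`F(A) := U Diag(f(λᵢ)) U*` (junk value `0` if `A` is not Hermitian). -/
noncomputable def matExt {𝕜 : Type*} [RCLike 𝕜] {n : Type*} [Fintype n] [DecidableEq n]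
    (f : ℝ → ℝ) (A : Matrix n n 𝕜) : Matrix n n 𝕜 :=
  if hA : A.IsHermitian then
    (hA.eigenvectorUnitary : Matrix n n 𝕜) *
      Matrix.diagonal (fun i => (f (hA.eigenvalues i) : 𝕜)) *
      star (hA.eigenvectorUnitary : Matrix n n 𝕜)
  else 0

lemma trace_matExt {n : Type*} [Fintype n] [DecidableEq n]
    (f : ℝ → ℝ) (A : Matrix n n ℂ) (hA : A.IsHermitian) :
    (matExt f A).trace = ∑ i, (f (hA.eigenvalues i) : ℂ) := by
  rw [matExt, dif_pos hA, trace_mul_cycle,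
    Matrix.mem_unitaryGroup_iff'.mp hA.eigenvectorUnitary.2, one_mul, trace_diagonal]
  norm_num

lemma pow_conj {n : Type*} [Fintype n] [DecidableEq n]
    (V D : Matrix n n ℂ) (h1 : star V * V = 1) (h2 : V * star V = 1) (j : ℕ) :
    (V * D * star V) ^ j = V * D ^ j * star V := by
  induction j with
  | zero => simp [h2]
  | succ j ih =>
    rw [pow_succ, ih, pow_succ]
    calc V * D ^ j * star V * (V * D * star V)
        = V * D ^ j * (star V * V) * D * star V := by noncomm_ring
      _ = V * (D ^ j * D) * star V := by rw [h1]; noncomm_ring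

lemma aeval_conj {n : Type*} [Fintype n] [DecidableEq n]
    (V D : Matrix n n ℂ) (h1 : star V * V = 1) (h2 : V * star V = 1) (P : ℂ[X]) :
    aeval (V * D * star V) P = V * aeval D P * star V := by
  induction P using Polynomial.induction_on' with
  | add p q hp hq => simp [hp, hq, mul_add, add_mul]
  | monomial m a =>
    simp only [aeval_monomial, pow_conj V D h1 h2 m]
    rw [Algebra.algebraMap_eq_smul_one]
    simp [Matrix.mul_smul, Matrix.smul_mul]

lemma trace_aeval_hermitian {n : Type*} [Fintype n] [DecidableEq n]
    (A : Matrix n n ℂ) (hA : A.IsHermitian) (P : ℂ[X]) :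
    (aeval A P).trace = ∑ i, P.eval ((hA.eigenvalues i : ℂ)) := by
  have hV1 := Matrix.mem_unitaryGroup_iff'.mp hA.eigenvectorUnitary.2
  have hV2 := Matrix.mem_unitaryGroup_iff.mp hA.eigenvectorUnitary.2
  conv_lhs => rw [hA.spectral_theorem, Unitary.conjStarAlgAut_apply, aeval_conj _ _ hV1 hV2]
  rw [trace_mul_cycle, hV1, one_mul]
  have hdiag : aeval (Matrix.diagonal (RCLike.ofReal ∘ hA.eigenvalues) : Matrix n n ℂ) P
      = Matrix.diagonal (fun i => aeval ((hA.eigenvalues i : ℂ)) P) := by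
    have h := aeval_algHom_apply (Matrix.diagonalAlgHom (α := ℂ) (n := n) ℂ)
      (fun i => ((hA.eigenvalues i : ℂ))) P
    simp only [Matrix.diagonalAlgHom_apply] at h
    have hc : (RCLike.ofReal ∘ hA.eigenvalues : n → ℂ)
        = fun i => ((hA.eigenvalues i : ℂ)) := rfl
    have h2 : ((aeval fun i => ((hA.eigenvalues i : ℂ))) P)
        = fun i => aeval ((hA.eigenvalues i : ℂ)) P :=
      funext fun i => aeval_fn_apply P _ i
    rw [hc, h, h2]
  rw [hdiag, trace_diagonal]
  simp [aeval_def, eval₂_eq_eval_map]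

/-- Let `U` be a complex `k×r` matrix with orthonormal columns, `M` a `k×k` Hermitian matrix
with `U U* M = M`, and `f : ℝ → ℝ` with `f(0) = 0`. Then `Tr F(M) = Tr F(U* M U)`. -/
theorem trace_matExt_compress {k r : ℕ} (U : Matrix (Fin k) (Fin r) ℂ)
    (hU : Uᴴ * U = 1)
    (M : Matrix (Fin k) (Fin k) ℂ) (hM : M.IsHermitian) (hUM : U * Uᴴ * M = M)
    (f : ℝ → ℝ) (hf0 : f 0 = 0) :
    (matExt f M).trace = (matExt f (Uᴴ * M * U)).trace := by
  set N : Matrix (Fin r) (Fin r) ℂ := Uᴴ * M * U with hNdef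
  have hN : N.IsHermitian := by
    show (Uᴴ * M * U)ᴴ = Uᴴ * M * U
    rw [conjTranspose_mul, conjTranspose_mul, conjTranspose_conjTranspose, hM.eq, Matrix.mul_assoc]
  -- M = U N Uᴴ
  have hMU : M * (U * Uᴴ) = M := by
    have := congrArg conjTranspose hUM
    simpa [conjTranspose_mul, hM.eq, mul_assoc] using this
  have hMN : M = U * N * Uᴴ := by
    calc M = M * (U * Uᴴ) := hMU.symm
      _ = (U * Uᴴ * M) * (U * Uᴴ) := by rw [hUM]
      _ = U * N * Uᴴ := by rw [hNdef]; simp only [Matrix.mul_assoc]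
  have hpow : ∀ j : ℕ, M ^ (j + 1) = U * N ^ (j + 1) * Uᴴ := by
    intro j
    induction j with
    | zero => simpa using hMN
    | succ j ih =>
      calc M ^ (j + 2) = M ^ (j + 1) * M := by rw [pow_succ]
        _ = (U * N ^ (j + 1) * Uᴴ) * (U * N * Uᴴ) := by rw [ih, ← hMN]
        _ = U * N ^ (j + 1) * (Uᴴ * U) * N * Uᴴ := by simp only [Matrix.mul_assoc]
        _ = U * (N ^ (j + 1) * N) * Uᴴ := by rw [hU]; simp only [Matrix.mul_assoc, Matrix.mul_one, Matrix.one_mul]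
        _ = U * N ^ (j + 2) * Uᴴ := by rw [← pow_succ]
  have htr : ∀ j : ℕ, (M ^ (j + 1)).trace = (N ^ (j + 1)).trace := by
    intro j
    rw [hpow j, trace_mul_cycle, hU, one_mul]
  -- interpolation polynomial
  set S : Finset ℝ :=
    insert 0 ((Finset.univ.image hM.eigenvalues) ∪ (Finset.univ.image hN.eigenvalues)) with hS
  set p : Polynomial ℝ := Lagrange.interpolate S id f with hpdef
  have hps : ∀ x ∈ S, p.eval x = f x := fun x hx =>
    Lagrange.eval_interpolate_at_node f (Set.injOn_id _) hx
  have hp0 : p.coeff 0 = 0 := by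
    rw [coeff_zero_eq_eval_zero, hps 0 (by simp [hS]), hf0]
  set P : Polynomial ℂ := p.map (algebraMap ℝ ℂ) with hPdef
  have hP0 : P.coeff 0 = 0 := by simp [hPdef, coeff_map, hp0]
  have hPeval : ∀ x : ℝ, P.eval (x : ℂ) = ((p.eval x : ℝ) : ℂ) := by
    intro x
    rw [hPdef, eval_map]
    exact eval₂_hom (algebraMap ℝ ℂ) x
  have key : (aeval M P).trace = (aeval N P).trace := by
    rw [aeval_eq_sum_range (p := P) M, aeval_eq_sum_range (p := P) N,
      trace_sum, trace_sum]
    refine Finset.sum_congr rfl fun j _ => ?_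
    rw [trace_smul, trace_smul]
    cases j with
    | zero => simp [hP0]
    | succ j => rw [htr j]
  have hMside : (matExt f M).trace = (aeval M P).trace := by
    rw [trace_matExt f M hM, trace_aeval_hermitian M hM P]
    refine Finset.sum_congr rfl fun i _ => ?_
    rw [hPeval, hps _ (by simp [hS, Finset.mem_insert, Finset.mem_union])]
  have hNside : (matExt f N).trace = (aeval N P).trace := by
    rw [trace_matExt f N hN, trace_aeval_hermitian N hN P]
    refine Finset.sum_congr rfl fun i _ => ?_
    rw [hPeval, hps _ (by simp [hS, Finset.mem_insert, Finset.mem_union])]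
  rw [hMside, key, ← hNside]
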